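/- Let 0 < α < 1 and let f ∈ C¹((0,T)) ∩ C([0,T]) be such that its Caputo fractional derivative of order α is defined at t₀, where t₀ ∈ (0,T] is a point at which f attains its minimum over the interval [0,T]. Then ∂^α_{+0,t} f(t₀) ≤ 0. -/

import Mathlib

open Set MeasureTheory Filter

/-- Caputo fractional derivative of order `α` at base point `0`. -/
noncomputable def caputo (α : ℝ) (f : ℝ → ℝ) (t : ℝ) : ℝ :=
  (1 / Real.Gamma (1 - α)) * ∫ s in (0:ℝ)..t, (t - s) ^ (-α) * deriv f s

/-- Caputo derivative at a minimum point is nonpositive. -/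
theorem caputo_nonpos_at_min (α T t₀ : ℝ) (hα : 0 < α ∧ α < 1) (hT : 0 < T) (f : ℝ → ℝ)
    (hc : ContinuousOn f (Set.Icc 0 T))
    (hd : ∀ t ∈ Set.Ioo (0:ℝ) T, DifferentiableAt ℝ f t)
    (hd' : ContinuousOn (deriv f) (Set.Ioo 0 T))
    (ht₀ : t₀ ∈ Set.Ioc (0:ℝ) T)
    (hint : IntervalIntegrable (fun s => (t₀ - s) ^ (-α) * deriv f s) MeasureTheory.volume 0 t₀)
    (hmin : ∀ t ∈ Set.Icc (0:ℝ) T, f t₀ ≤ f t) :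
    caputo α f t₀ ≤ 0 := by
  obtain ⟨hα0, hα1⟩ := hα
  obtain ⟨ht0, htT⟩ := ht₀
  set μ : Measure ℝ := volume.restrict (Set.Ioo 0 t₀) with hμ
  -- f' is interval integrable on [0, t₀]
  have hBint : IntervalIntegrable (deriv f) volume 0 t₀ := by
    have hne : ∀ᵐ x : ℝ ∂(volume.restrict (Set.uIoc (0:ℝ) t₀)), x ≠ t₀ := by
      refine ae_restrict_of_ae ?_
      refine ae_iff.2 ?_
      simp only [ne_eq, not_not]
      simpa using Real.volume_singleton
    refine (hint.const_mul (t₀ ^ α)).mono_fun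
      ((measurable_deriv f).aestronglyMeasurable) ?_
    filter_upwards [hne, ae_restrict_mem measurableSet_uIoc] with x hx hx'
    rw [Set.uIoc_of_le ht0.le] at hx'
    have hpos : 0 < t₀ - x := by
      rcases lt_or_eq_of_le hx'.2 with h | h
      · linarith
      · exact absurd h hx
    have h1 : t₀ ^ (-α) ≤ (t₀ - x) ^ (-α) :=
      Real.rpow_le_rpow_of_nonpos hpos (by linarith [hx'.1]) (by linarith)
    have h2 : (1:ℝ) ≤ t₀ ^ α * (t₀ - x) ^ (-α) := by
      have := mul_le_mul_of_nonneg_left h1 (Real.rpow_nonneg ht0.le α)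
      rwa [Real.rpow_neg ht0.le, mul_inv_cancel₀ (ne_of_gt (Real.rpow_pos_of_pos ht0 α))] at this
    have h3 : 0 ≤ t₀ ^ α := Real.rpow_nonneg ht0.le α
    have h4 : 0 ≤ (t₀ - x) ^ (-α) := Real.rpow_nonneg hpos.le _
    simp only [Real.norm_eq_abs, abs_mul, abs_of_nonneg h3, abs_of_nonneg h4, ← mul_assoc]
    nlinarith [abs_nonneg (deriv f x)]
  -- FTC on [r, t₀] for 0 ≤ r < t₀
  have hFTCr : ∀ r, 0 ≤ r → r < t₀ → ∫ s in r..t₀, deriv f s = f t₀ - f r := by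
    intro r hr0 hrt
    refine intervalIntegral.integral_eq_sub_of_hasDerivAt_of_le hrt.le
      (hc.mono (Set.Icc_subset_Icc hr0 htT)) (fun x hx => ?_) ?_
    · exact (hd x ⟨lt_of_le_of_lt hr0 hx.1, lt_of_lt_of_le hx.2 htT⟩).hasDerivAt
    · exact hBint.mono_set (Set.uIcc_subset_uIcc
        (by rw [Set.mem_uIcc]; left; exact ⟨hr0, hrt.le⟩)
        (by rw [Set.mem_uIcc]; left; exact ⟨ht0.le, le_rfl⟩))
  have hFTC : ∫ s in (0:ℝ)..t₀, deriv f s = f t₀ - f 0 := hFTCr 0 le_rfl ht0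
  -- FTC for the kernel
  have hker : ∀ s ∈ Set.Ioo (0:ℝ) t₀,
      ∫ r in (0:ℝ)..s, α * (t₀ - r) ^ (-α - 1) = (t₀ - s) ^ (-α) - t₀ ^ (-α) := by
    intro s hs
    have key : ∫ r in (0:ℝ)..s, α * (t₀ - r) ^ (-α - 1)
        = (fun r => (t₀ - r) ^ (-α)) s - (fun r => (t₀ - r) ^ (-α)) 0 := by
      refine intervalIntegral.integral_eq_sub_of_hasDerivAt
        (f := fun r => (t₀ - r) ^ (-α)) (f' := fun r => α * (t₀ - r) ^ (-α - 1))
        (fun x hx => ?_) ?_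
      · rw [Set.uIcc_of_le hs.1.le] at hx
        have hpos : 0 < t₀ - x := by
          have := hx.2; have := hs.2; linarith
        have h1 : HasDerivAt (fun x : ℝ => t₀ - x) (-1) x := (hasDerivAt_id x).const_sub t₀
        have h2 := (Real.hasDerivAt_rpow_const (x := t₀ - x) (p := -α)
          (Or.inl (ne_of_gt hpos))).comp x h1
        exact h2.congr_deriv (by ring)
      · refine ContinuousOn.intervalIntegrable ?_
        refine ContinuousOn.mul continuousOn_const ?_
        refine ContinuousOn.rpow_const ((continuousOn_const.sub continuousOn_id)) ?_
        intro x hx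
        rw [Set.uIcc_of_le hs.1.le] at hx
        left
        have := hx.2; have := hs.2
        intro h; linarith [sub_eq_zero.mp h]
    simpa using key
  -- the double-variable function
  set F : ℝ → ℝ → ℝ := fun r s => if r < s then α * (t₀ - r) ^ (-α - 1) * deriv f s else 0
    with hF
  have hFm : Measurable (Function.uncurry F) := by
    have : Function.uncurry F = fun p : ℝ × ℝ =>
        if p.1 < p.2 then α * (t₀ - p.1) ^ (-α - 1) * deriv f p.2 else 0 := rfl
    rw [this]
    refine Measurable.ite (measurableSet_lt measurable_fst measurable_snd) ?_ measurable_const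
    exact ((measurable_const.mul (by fun_prop : Measurable fun p : ℝ × ℝ => (t₀ - p.1) ^ (-α-1))).mul
      ((measurable_deriv f).comp measurable_snd))
  -- the r-sections as indicator functions
  have hsecfun : ∀ s : ℝ, ∀ c : ℝ, (fun r => if r < s then α * (t₀ - r) ^ (-α - 1) * c else 0)
      = (Set.Iio s).indicator (fun r => α * (t₀ - r) ^ (-α - 1) * c) := by
    intro s c; ext r; simp [Set.indicator_apply]
  have hIioIoo : ∀ s ∈ Set.Ioo (0:ℝ) t₀, Set.Iio s ∩ Set.Ioo 0 t₀ = Set.Ioo 0 s := by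
    intro s hs
    ext x
    constructor
    · rintro ⟨h1, h2, h3⟩; exact ⟨h2, h1⟩
    · rintro ⟨h1, h2⟩; exact ⟨h2, h1, h2.trans hs.2⟩
  -- integral of an r-section
  have hsec : ∀ s ∈ Set.Ioo (0:ℝ) t₀, ∀ c : ℝ,
      ∫ r, (if r < s then α * (t₀ - r) ^ (-α - 1) * c else 0) ∂μ
        = ((t₀ - s) ^ (-α) - t₀ ^ (-α)) * c := by
    intro s hs c
    rw [hsecfun s c, integral_indicator measurableSet_Iio, hμ,
      Measure.restrict_restrict measurableSet_Iio, hIioIoo s hs,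
      ← integral_Ioc_eq_integral_Ioo, ← intervalIntegral.integral_of_le hs.1.le,
      intervalIntegral.integral_mul_const, hker s hs]
  -- integrability of an r-section
  have hsecint : ∀ s ∈ Set.Ioo (0:ℝ) t₀, ∀ c : ℝ,
      Integrable (fun r => if r < s then α * (t₀ - r) ^ (-α - 1) * c else 0) μ := by
    intro s hs c
    rw [hsecfun s c, hμ, integrable_indicator_iff measurableSet_Iio, IntegrableOn,
      Measure.restrict_restrict measurableSet_Iio, hIioIoo s hs]
    refine IntegrableOn.mono_set ?_ Set.Ioo_subset_Icc_self
    refine ContinuousOn.integrableOn_Icc ?_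
    refine ContinuousOn.mul (ContinuousOn.mul continuousOn_const ?_) continuousOn_const
    refine ContinuousOn.rpow_const ((continuousOn_const.sub continuousOn_id)) ?_
    intro x hx
    left
    have := hx.2; have := hs.2
    intro h; linarith [sub_eq_zero.mp h]
  -- integrability of |(t₀-s)^(-α) - t₀^(-α)| * |f'|
  have hG : Integrable (fun s => ((t₀ - s) ^ (-α) - t₀ ^ (-α)) * |deriv f s|) μ := by
    have hA : IntegrableOn (fun s => |(t₀ - s) ^ (-α) * deriv f s|) (Set.Ioo 0 t₀) volume :=
      MeasureTheory.IntegrableOn.mono_set hint.1.norm Set.Ioo_subset_Ioc_self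
    have hB : IntegrableOn (fun s => t₀ ^ (-α) * |deriv f s|) (Set.Ioo 0 t₀) volume :=
      MeasureTheory.IntegrableOn.mono_set (hBint.1.norm.const_mul _) Set.Ioo_subset_Ioc_self
    refine (hA.sub hB).congr ?_
    filter_upwards [ae_restrict_mem measurableSet_Ioo] with x hx
    have hpos : (0:ℝ) < t₀ - x := by have := hx.2; linarith
    simp only [Pi.sub_apply]
    rw [abs_mul, abs_of_nonneg (Real.rpow_nonneg hpos.le _), sub_mul]
  -- product integrability
  have hFint : Integrable (Function.uncurry F) (μ.prod μ) := by
    rw [integrable_prod_iff' hFm.aestronglyMeasurable]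
    constructor
    · filter_upwards [ae_restrict_mem measurableSet_Ioo] with s hs
      exact hsecint s hs (deriv f s)
    · refine hG.congr ?_
      filter_upwards [ae_restrict_mem measurableSet_Ioo] with s hs
      have h1 : ∫ r, ‖Function.uncurry F (r, s)‖ ∂μ
          = ∫ r, (if r < s then α * (t₀ - r) ^ (-α - 1) * |deriv f s| else 0) ∂μ := by
        refine integral_congr_ae ?_
        filter_upwards [ae_restrict_mem measurableSet_Ioo] with r hr
        have hpos : (0:ℝ) < t₀ - r := by have := hr.2; linarith
        have hk : 0 ≤ α * (t₀ - r) ^ (-α - 1) :=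
          mul_nonneg hα0.le (Real.rpow_nonneg hpos.le _)
        by_cases h : r < s
        · simp only [Function.uncurry, F, if_pos h, Real.norm_eq_abs, abs_mul,
            abs_of_nonneg hα0.le, abs_of_nonneg (Real.rpow_nonneg hpos.le _)]
        · simp [Function.uncurry, F, if_neg h]
      rw [h1, hsec s hs]
  -- the inner integral over s for fixed r
  have hclaim2 : ∀ r ∈ Set.Ioo (0:ℝ) t₀,
      ∫ s, F r s ∂μ = α * (t₀ - r) ^ (-α - 1) * (f t₀ - f r) := by
    intro r hr
    have hfun : (fun s => F r s)
        = (Set.Ioi r).indicator (fun s => α * (t₀ - r) ^ (-α - 1) * deriv f s) := by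
      ext s; simp only [hF, Set.indicator_apply, Set.mem_Ioi]
    have hset : Set.Ioi r ∩ Set.Ioo 0 t₀ = Set.Ioo r t₀ := by
      ext x
      constructor
      · rintro ⟨h1, h2, h3⟩; exact ⟨h1, h3⟩
      · rintro ⟨h1, h2⟩; exact ⟨h1, hr.1.trans h1, h2⟩
    rw [hfun, integral_indicator measurableSet_Ioi, hμ,
      Measure.restrict_restrict measurableSet_Ioi, hset,
      ← integral_Ioc_eq_integral_Ioo, ← intervalIntegral.integral_of_le hr.2.le,
      intervalIntegral.integral_const_mul, hFTCr r hr.1.le hr.2]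
  -- the key inequality
  have hJ : ∫ s in (0:ℝ)..t₀, ((t₀ - s) ^ (-α) - t₀ ^ (-α)) * deriv f s ≤ 0 := by
    have e1 : ∫ s in (0:ℝ)..t₀, ((t₀ - s) ^ (-α) - t₀ ^ (-α)) * deriv f s
        = ∫ s, ((t₀ - s) ^ (-α) - t₀ ^ (-α)) * deriv f s ∂μ := by
      rw [intervalIntegral.integral_of_le ht0.le, integral_Ioc_eq_integral_Ioo, hμ]
    have e2 : ∫ s, ((t₀ - s) ^ (-α) - t₀ ^ (-α)) * deriv f s ∂μ
        = ∫ s, ∫ r, F r s ∂μ ∂μ := by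
      refine integral_congr_ae ?_
      filter_upwards [ae_restrict_mem measurableSet_Ioo] with s hs
      exact (hsec s hs (deriv f s)).symm
    have e3 : ∫ s, ∫ r, F r s ∂μ ∂μ = ∫ r, ∫ s, F r s ∂μ ∂μ :=
      (integral_integral_swap hFint).symm
    rw [e1, e2, e3]
    refine integral_nonpos_of_ae ?_
    filter_upwards [ae_restrict_mem measurableSet_Ioo] with r hr
    rw [hclaim2 r hr]
    have hpos : (0:ℝ) < t₀ - r := by have := hr.2; linarith
    refine mul_nonpos_of_nonneg_of_nonpos
      (mul_nonneg hα0.le (Real.rpow_nonneg hpos.le _)) ?_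
    have : f t₀ ≤ f r := hmin r ⟨hr.1.le, hr.2.le.trans htT⟩
    linarith
  -- split the main integral
  have h1 : IntervalIntegrable (fun s => t₀ ^ (-α) * deriv f s) volume 0 t₀ :=
    hBint.const_mul _
  have h2 : ∫ s in (0:ℝ)..t₀, ((t₀ - s) ^ (-α) - t₀ ^ (-α)) * deriv f s
      = (∫ s in (0:ℝ)..t₀, (t₀ - s) ^ (-α) * deriv f s)
        - ∫ s in (0:ℝ)..t₀, t₀ ^ (-α) * deriv f s := by
    simp_rw [sub_mul]
    exact intervalIntegral.integral_sub hint h1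
  have h3 : ∫ s in (0:ℝ)..t₀, t₀ ^ (-α) * deriv f s = t₀ ^ (-α) * (f t₀ - f 0) := by
    rw [intervalIntegral.integral_const_mul, hFTC]
  have h4 : t₀ ^ (-α) * (f t₀ - f 0) ≤ 0 := by
    refine mul_nonpos_of_nonneg_of_nonpos (Real.rpow_nonneg ht0.le _) ?_
    have : f t₀ ≤ f 0 := hmin 0 ⟨le_rfl, hT.le⟩
    linarith
  have hI : ∫ s in (0:ℝ)..t₀, (t₀ - s) ^ (-α) * deriv f s ≤ 0 := by linarith
  -- conclude
  have hΓ : 0 < Real.Gamma (1 - α) := Real.Gamma_pos_of_pos (by linarith)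
  unfold caputo
  exact mul_nonpos_of_nonneg_of_nonpos (by positivity) hI
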